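/- For every integer t ≥ 1: (a) the number WS_t(n) of weightings of the star graph S_t equals ∑_{k=1}^{n+1} k^t for every n ≥ 0; and (b) as formal power series over ℚ, (∑_{n≥0} WS_t(n) x^{n+1}) · (1−x)^{t+2} = A_t(x). -/

import Mathlib

open Finset


/-- `WG G n` is the number of weightings `α : V → {0,…,n}` of the simple graph `G`
such that `α u + α v ≤ n` for every edge `uv`. -/
noncomputable def WG {V : Type*} [Fintype V] (G : SimpleGraph V) (n : ℕ) : ℕ :=
  Nat.card {α : V → ℕ // (∀ v, α v ≤ n) ∧ ∀ u v, G.Adj u v → α u + α v ≤ n}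

/-- The star graph `S_t` on `t+1` vertices: the hub `0` is adjacent to the
`t` other vertices, and there are no other edges. -/
def starGraph (t : ℕ) : SimpleGraph (Fin (t + 1)) :=
  SimpleGraph.fromRel (fun u _ => u = 0)

/-- The number of descents of a permutation `σ` of `{0,…,t-1}` (written in one-line
notation `σ 0, σ 1, …, σ (t-1)`): indices `i` with `i+1 < t` and `σ i > σ (i+1)`. -/
noncomputable def descentCount (t : ℕ) (σ : Equiv.Perm (Fin t)) : ℕ :=
  Nat.card {i : Fin t // ∃ h : (i : ℕ) + 1 < t, σ ⟨(i : ℕ) + 1, h⟩ < σ i}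

/-- The Eulerian number `A(t,k)`: the number of permutations of `t` letters
with exactly `k - 1` descents. -/
noncomputable def eulerian (t k : ℕ) : ℕ :=
  Nat.card {σ : Equiv.Perm (Fin t) // descentCount t σ = k - 1}

/-- The Eulerian polynomial `A_t(x) = ∑_{k=1}^{t} A(t,k) xᵏ`, over `ℚ`. -/
noncomputable def eulerianPoly (t : ℕ) : Polynomial ℚ :=
  ∑ k ∈ Finset.Icc 1 t, Polynomial.C (eulerian t k : ℚ) * Polynomial.X ^ k


namespace StarAux

variable (t : ℕ) (σ : Equiv.Perm (Fin t))

/-- descent at natural index `j`. -/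
def des (j : ℕ) : Prop :=
  ∃ hj : j + 1 < t, σ ⟨j + 1, hj⟩ < σ ⟨j, Nat.lt_of_succ_lt hj⟩

instance : DecidablePred (des t σ) := fun j => by
  unfold des
  by_cases h : j + 1 < t
  · exact decidable_of_iff (σ ⟨j + 1, h⟩ < σ ⟨j, Nat.lt_of_succ_lt h⟩)
      ⟨fun hh => ⟨h, hh⟩, fun ⟨_, hh⟩ => hh⟩
  · exact isFalse fun ⟨hj, _⟩ => h hj

/-- number of descents `< i`. -/
def dcnt (i : ℕ) : ℕ := ((range i).filter (des t σ)).card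

/-- number of non-descents `< i`. -/
def ndcnt (i : ℕ) : ℕ := ((range i).filter fun j => ¬ des t σ j).card

lemma dcnt_add_ndcnt (i : ℕ) : dcnt t σ i + ndcnt t σ i = i := by
  rw [dcnt, ndcnt, Finset.card_filter_add_card_filter_not, card_range]

lemma dcnt_succ (i : ℕ) :
    dcnt t σ (i + 1) = dcnt t σ i + if des t σ i then 1 else 0 := by
  rw [dcnt, dcnt, Finset.range_add_one, Finset.filter_insert]
  split <;> simp [Finset.card_insert_of_notMem, Finset.notMem_range_self]

lemma ndcnt_succ (i : ℕ) :
    ndcnt t σ (i + 1) = ndcnt t σ i + if des t σ i then 0 else 1 := by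
  rw [ndcnt, ndcnt, Finset.range_add_one, Finset.filter_insert]
  split <;> simp_all [Finset.card_insert_of_notMem, Finset.notMem_range_self]

lemma dcnt_mono : Monotone (dcnt t σ) := fun i j hij =>
  Finset.card_le_card (Finset.filter_subset_filter _ (Finset.range_subset_range.2 hij))

lemma ndcnt_mono : Monotone (ndcnt t σ) := fun i j hij =>
  Finset.card_le_card (Finset.filter_subset_filter _ (Finset.range_subset_range.2 hij))

lemma dcnt_eq_of_le (i j : ℕ) (hi : t ≤ i + 1) (hij : i ≤ j) : dcnt t σ j = dcnt t σ i := by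
  refine le_antisymm (Finset.card_le_card fun k hk => ?_) (dcnt_mono t σ hij)
  rw [Finset.mem_filter] at hk ⊢
  obtain ⟨hd, hd2⟩ := hk.2
  exact ⟨Finset.mem_range.2 (by omega), hk.2⟩

lemma dcnt_le (i : ℕ) : dcnt t σ i + 1 ≤ t ∨ dcnt t σ i = 0 := by
  rcases Nat.eq_zero_or_pos t with h | h
  · right
    have : filter (des t σ) (range i) = ∅ := by
      refine Finset.filter_false_of_mem fun j _ => ?_
      rintro ⟨hj, -⟩; omega
    simp [dcnt, this]
  · left
    have h1 : dcnt t σ i ≤ dcnt t σ (t - 1 + (i + t)) := dcnt_mono t σ (by omega)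
    have h2 : dcnt t σ (t - 1 + (i + t)) = dcnt t σ (t - 1) := dcnt_eq_of_le t σ _ _ (by omega) (by omega)
    have h3 : dcnt t σ (t - 1) ≤ t - 1 := le_trans (Finset.card_filter_le _ _) (by simp)
    omega

/-- `descentCount` agrees with `dcnt t σ t`. -/
lemma descentCount_eq : descentCount t σ = dcnt t σ t := by
  classical
  have h0 : descentCount t σ = Nat.card {i : Fin t // des t σ (i : ℕ)} := rfl
  rw [h0, Nat.card_eq_fintype_card, Fintype.card_subtype, dcnt, Finset.card_filter, Finset.card_filter,
    Fin.sum_univ_eq_sum_range (fun j => if des t σ j then 1 else 0) t]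

/-- The weightings of the star graph, as an explicit sigma type. -/
def starEquiv (t n : ℕ) :
    {α : Fin (t + 1) → ℕ // (∀ v, α v ≤ n) ∧
        ∀ u v, (starGraph t).Adj u v → α u + α v ≤ n} ≃
      (Σ a : Fin (n + 1), (Fin t → Fin (n + 1 - (a : ℕ)))) where
  toFun α := ⟨⟨α.1 0, Nat.lt_succ_of_le (α.2.1 0)⟩, fun i =>
    ⟨α.1 i.succ, by
      have hadj : (starGraph t).Adj 0 i.succ := by
        rw [starGraph, SimpleGraph.fromRel_adj]
        exact ⟨(Fin.succ_ne_zero i).symm, Or.inl rfl⟩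
      have := α.2.2 0 i.succ hadj
      have h0 := α.2.1 0
      show (α.1 i.succ : ℕ) < n + 1 - (α.1 0)
      omega⟩⟩
  invFun p := ⟨fun v => Fin.cases ((p.1 : ℕ)) (fun i => ((p.2 i : ℕ))) v, by
    obtain ⟨a, g⟩ := p
    have ha : (a : ℕ) ≤ n := Nat.lt_succ_iff.1 a.2
    constructor
    · intro v
      induction v using Fin.cases with
      | zero => simpa using ha
      | succ i => have := (g i).2; simp only [Fin.cases_succ]; omega
    · intro u v huv
      rw [starGraph, SimpleGraph.fromRel_adj] at huv
      obtain ⟨hne, h0⟩ := huv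
      induction u using Fin.cases with
      | zero =>
        induction v using Fin.cases with
        | zero => exact absurd rfl hne
        | succ i => have := (g i).2; simp only [Fin.cases_zero, Fin.cases_succ]; omega
      | succ j =>
        induction v using Fin.cases with
        | zero => have := (g j).2; simp only [Fin.cases_zero, Fin.cases_succ]; omega
        | succ i =>
          rcases h0 with h | h
          · exact absurd h (Fin.succ_ne_zero j)
          · exact absurd h (Fin.succ_ne_zero i)⟩
  left_inv α := by
    ext v
    induction v using Fin.cases with
    | zero => rfl
    | succ i => rfl
  right_inv p := by
    obtain ⟨a, g⟩ := p
    rfl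

lemma WG_star (t n : ℕ) :
    WG (starGraph t) n = ∑ k ∈ Finset.Icc 1 (n + 1), k ^ t := by
  classical
  rw [WG, Nat.card_congr (starEquiv t n), Nat.card_eq_fintype_card, Fintype.card_sigma]
  have h1 : ∀ a : Fin (n + 1), Fintype.card (Fin t → Fin (n + 1 - (a : ℕ)))
      = (n + 1 - (a : ℕ)) ^ t := by
    intro a; simp [Fintype.card_fun]
  rw [Finset.sum_congr rfl fun a _ => h1 a]
  rw [Fin.sum_univ_eq_sum_range (fun a => (n + 1 - a) ^ t) (n + 1)]
  rw [show ∑ k ∈ Finset.Icc 1 (n + 1), k ^ t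
      = ∑ j ∈ Finset.range (n + 1), (j + 1) ^ t from ?_]
  · rw [← Finset.sum_range_reflect (fun j => (j + 1) ^ t) (n + 1)]
    refine Finset.sum_congr rfl fun j hj => ?_
    rw [Finset.mem_range] at hj
    congr 1
    omega
  · rw [← Finset.Ico_add_one_right_eq_Icc, Finset.sum_Ico_eq_sum_range]
    simp [add_comm]

section adj

variable {α : Type*} [Preorder α]

lemma strictMono_of_adj {t : ℕ} {f : Fin t → α}
    (h : ∀ j (hj : j + 1 < t), f ⟨j, Nat.lt_of_succ_lt hj⟩ < f ⟨j + 1, hj⟩) :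
    StrictMono f := by
  have key : ∀ k (i : ℕ) (hik : i + k + 1 < t),
      f ⟨i, by omega⟩ < f ⟨i + k + 1, hik⟩ := by
    intro k
    induction k with
    | zero => intro i hik; exact h i hik
    | succ k ih =>
      intro i hik
      show f ⟨i, by omega⟩ < f ⟨i + k + 1 + 1, by omega⟩
      exact lt_trans (ih i (by omega)) (h (i + k + 1) (by omega))
  intro i j hij
  have hlt : (i : ℕ) < (j : ℕ) := hij
  have h1 : f i = f ⟨(i : ℕ), i.2⟩ := rfl
  have h2 : f j = f ⟨(i : ℕ) + ((j : ℕ) - (i : ℕ) - 1) + 1, by omega⟩ := by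
    congr 1; apply Fin.ext; simp; omega
  rw [h1, h2]
  exact key _ _ _

lemma monotone_of_adj {t : ℕ} {f : Fin t → α}
    (h : ∀ j (hj : j + 1 < t), f ⟨j, Nat.lt_of_succ_lt hj⟩ ≤ f ⟨j + 1, hj⟩) :
    Monotone f := by
  have key : ∀ k (i : ℕ) (hik : i + k < t),
      f ⟨i, by omega⟩ ≤ f ⟨i + k, hik⟩ := by
    intro k
    induction k with
    | zero => intro i hik; exact le_refl _
    | succ k ih =>
      intro i hik
      show f ⟨i, by omega⟩ ≤ f ⟨i + k + 1, by omega⟩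
      exact le_trans (ih i (by omega)) (h (i + k) (by omega))
  intro i j hij
  have hle : (i : ℕ) ≤ (j : ℕ) := hij
  have h1 : f i = f ⟨(i : ℕ), i.2⟩ := rfl
  have h2 : f j = f ⟨(i : ℕ) + ((j : ℕ) - (i : ℕ)), by omega⟩ := by
    congr 1; apply Fin.ext; simp; omega
  rw [h1, h2]
  exact key _ _ _

end adj

lemma strictMono_gap {N t : ℕ} {h : Fin t → Fin N} (hh : StrictMono h)
    (i k : ℕ) (hik : i + k < t) :
    (h ⟨i, by omega⟩ : ℕ) + k ≤ h ⟨i + k, hik⟩ := by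
  induction k with
  | zero => simp
  | succ k ih =>
    have h1 : (h ⟨i, by omega⟩ : ℕ) + k ≤ h ⟨i + k, by omega⟩ := ih (by omega)
    have h2 : h ⟨i + k, by omega⟩ < h ⟨i + k + 1, by omega⟩ := by
      apply hh
      simp [Fin.lt_def]
    have h2' : (h ⟨i + k, by omega⟩ : ℕ) < h ⟨i + k + 1, by omega⟩ := h2
    have : h ⟨i + (k+1), hik⟩ = h ⟨i + k + 1, by omega⟩ := by congr 1
    rw [this]
    omega

lemma strictMono_le {N t : ℕ} {h : Fin t → Fin N} (hh : StrictMono h)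
    (j : ℕ) (hj : j < t) : j ≤ (h ⟨j, hj⟩ : ℕ) := by
  have h0 := strictMono_gap hh 0 j (by omega)
  have e : (⟨0 + j, by omega⟩ : Fin t) = ⟨j, hj⟩ := Fin.ext (Nat.zero_add j)
  rw [e] at h0
  omega

/-- The number of strictly monotone maps `Fin k → Fin N` is `N.choose k`. -/
def strictMonoEquiv (k N : ℕ) :
    {f : Fin k → Fin N // StrictMono f} ≃ {s : Finset (Fin N) // s.card = k} where
  toFun f := ⟨Finset.univ.image f.1, by
    rw [Finset.card_image_of_injective _ f.2.injective, Finset.card_univ, Fintype.card_fin]⟩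
  invFun s := ⟨⇑(s.1.orderEmbOfFin s.2), (s.1.orderEmbOfFin s.2).strictMono⟩
  left_inv f := Subtype.ext
    (Finset.orderEmbOfFin_unique _
      (fun x => Finset.mem_image_of_mem _ (Finset.mem_univ x)) f.2).symm
  right_inv s := by
    refine Subtype.ext ?_
    ext x
    simp only [Finset.mem_image, Finset.mem_univ, true_and]
    constructor
    · rintro ⟨i, rfl⟩; exact Finset.orderEmbOfFin_mem _ _ _
    · intro hx
      have : x ∈ Set.range (s.1.orderEmbOfFin s.2) := by
        rw [Finset.range_orderEmbOfFin]; exact hx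
      obtain ⟨i, hi⟩ := this
      exact ⟨i, hi⟩

lemma card_strictMono (k N : ℕ) :
    Fintype.card {f : Fin k → Fin N // StrictMono f} = N.choose k := by
  classical
  rw [Fintype.card_congr (strictMonoEquiv k N), Fintype.card_finset_len, Fintype.card_fin]

/-- The compatibility condition on `g` relative to `σ` (adjacent form). -/
def Qcond (t : ℕ) (σ : Equiv.Perm (Fin t)) {m : ℕ} (g : Fin t → Fin m) : Prop :=
  Monotone g ∧ ∀ j (hj : j + 1 < t),
    σ ⟨j + 1, hj⟩ < σ ⟨j, Nat.lt_of_succ_lt hj⟩ →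
      g ⟨j, Nat.lt_of_succ_lt hj⟩ < g ⟨j + 1, hj⟩

lemma ndcnt_add_dcnt_le (t : ℕ) (σ : Equiv.Perm (Fin t)) (i : Fin t) :
    ndcnt t σ (i : ℕ) + dcnt t σ t ≤ t - 1 := by
  have h1 : ndcnt t σ (i : ℕ) ≤ ndcnt t σ (t - 1) :=
    ndcnt_mono t σ (by have := i.2; omega)
  have h2 : dcnt t σ t = dcnt t σ (t - 1) :=
    dcnt_eq_of_le t σ (t - 1) t (by omega) (by omega)
  have h3 := dcnt_add_ndcnt t σ (t - 1)
  omega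

/-- The main counting equivalence for a fixed permutation. -/
def countEquiv (t : ℕ) (σ : Equiv.Perm (Fin t)) (m : ℕ) :
    {g : Fin t → Fin m // Qcond t σ g} ≃
      {h : Fin t → Fin (m + (t - 1 - dcnt t σ t)) // StrictMono h} where
  toFun g := ⟨fun i => ⟨(g.1 i : ℕ) + ndcnt t σ (i : ℕ), by
      have hb := ndcnt_add_dcnt_le t σ i
      have hg := (g.1 i).2
      omega⟩, by
    apply strictMono_of_adj
    intro j hj
    simp only [Fin.mk_lt_mk]
    by_cases hd : des t σ j
    · obtain ⟨hj', hlt⟩ := hd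
      have := g.2.2 j hj' hlt
      have hnd := ndcnt_succ t σ j
      rw [if_pos ⟨hj', hlt⟩] at hnd
      have : (g.1 ⟨j, Nat.lt_of_succ_lt hj⟩ : ℕ) < g.1 ⟨j + 1, hj⟩ := this
      omega
    · have hnd := ndcnt_succ t σ j
      rw [if_neg hd] at hnd
      have hmono : g.1 ⟨j, Nat.lt_of_succ_lt hj⟩ ≤ g.1 ⟨j + 1, hj⟩ :=
        g.2.1 (by simp [Fin.le_def])
      have : (g.1 ⟨j, Nat.lt_of_succ_lt hj⟩ : ℕ) ≤ g.1 ⟨j + 1, hj⟩ := hmono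
      omega⟩
  invFun h := ⟨fun i => ⟨(h.1 i : ℕ) - ndcnt t σ (i : ℕ), by
      have ht1 : (i : ℕ) + (t - 1 - (i : ℕ)) < t := by have := i.2; omega
      have hgap := strictMono_gap h.2 (i : ℕ) (t - 1 - (i : ℕ)) ht1
      have hlast := (h.1 ⟨(i : ℕ) + (t - 1 - (i : ℕ)), ht1⟩).2
      have hgap' : (h.1 i : ℕ) + (t - 1 - (i : ℕ)) ≤
          h.1 ⟨(i : ℕ) + (t - 1 - (i : ℕ)), ht1⟩ := hgap
      clear hgap
      have hlow : (i : ℕ) + (t - 1 - (i : ℕ)) ≤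
          (h.1 ⟨(i : ℕ) + (t - 1 - (i : ℕ)), ht1⟩ : ℕ) := strictMono_le h.2 _ ht1
      have hd1 : dcnt t σ (i : ℕ) ≤ dcnt t σ t := dcnt_mono t σ (le_of_lt i.2)
      have hd2 := dcnt_add_ndcnt t σ (i : ℕ)
      have hb := ndcnt_add_dcnt_le t σ i
      have hi := i.2
      omega⟩, by
    constructor
    · apply monotone_of_adj
      intro j hj
      simp only [Fin.mk_le_mk]
      have hstep : (h.1 ⟨j, Nat.lt_of_succ_lt hj⟩ : ℕ) < h.1 ⟨j + 1, hj⟩ :=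
        h.2 (by simp [Fin.lt_def])
      have hndj : ndcnt t σ j ≤ j := by have := dcnt_add_ndcnt t σ j; omega
      have hjle : j ≤ (h.1 ⟨j, Nat.lt_of_succ_lt hj⟩ : ℕ) :=
        strictMono_le h.2 j (Nat.lt_of_succ_lt hj)
      have hnd := ndcnt_succ t σ j
      by_cases hd : des t σ j <;> simp [hd] at hnd <;> omega
    · intro j hj hlt
      simp only [Fin.mk_lt_mk]
      have hstep : (h.1 ⟨j, Nat.lt_of_succ_lt hj⟩ : ℕ) < h.1 ⟨j + 1, hj⟩ :=
        h.2 (by simp [Fin.lt_def])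
      have hndj : ndcnt t σ j ≤ j := by have := dcnt_add_ndcnt t σ j; omega
      have hjle : j ≤ (h.1 ⟨j, Nat.lt_of_succ_lt hj⟩ : ℕ) :=
        strictMono_le h.2 j (Nat.lt_of_succ_lt hj)
      have hnd := ndcnt_succ t σ j
      rw [if_pos ⟨hj, hlt⟩] at hnd
      omega⟩
  left_inv g := by
    refine Subtype.ext (funext fun i => Fin.ext ?_)
    simp
  right_inv h := by
    refine Subtype.ext (funext fun i => Fin.ext ?_)
    have hndi : ndcnt t σ (i : ℕ) ≤ (h.1 i : ℕ) := by
      have hndj : ndcnt t σ (i : ℕ) ≤ (i : ℕ) := by have := dcnt_add_ndcnt t σ (i : ℕ); omega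
      have hjle : (i : ℕ) ≤ (h.1 i : ℕ) := strictMono_le h.2 (i : ℕ) i.2
      omega
    simp
    omega

lemma card_Qcond (t : ℕ) (σ : Equiv.Perm (Fin t)) (m : ℕ) :
    Nat.card {g : Fin t → Fin m // Qcond t σ g}
      = (m + (t - 1 - dcnt t σ t)).choose t := by
  classical
  rw [Nat.card_congr (countEquiv t σ m), Nat.card_eq_fintype_card, card_strictMono]


/-- The compatibility condition coming from `Tuple.eq_sort_iff`. -/
def Mcond (t : ℕ) (σ : Equiv.Perm (Fin t)) {m : ℕ} (g : Fin t → Fin m) : Prop :=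
  Monotone g ∧ ∀ i j : Fin t, i < j → g i = g j → σ i < σ j

lemma Mcond_iff_Qcond (t : ℕ) (σ : Equiv.Perm (Fin t)) {m : ℕ} (g : Fin t → Fin m) :
    Mcond t σ g ↔ Qcond t σ g := by
  constructor
  · rintro ⟨hm, hs⟩
    refine ⟨hm, fun j hj hlt => ?_⟩
    have hle : g ⟨j, Nat.lt_of_succ_lt hj⟩ ≤ g ⟨j + 1, hj⟩ :=
      hm (by simp [Fin.le_def])
    rcases lt_or_eq_of_le hle with h | h
    · exact h
    · exact absurd (hs ⟨j, Nat.lt_of_succ_lt hj⟩ ⟨j + 1, hj⟩ (by simp [Fin.lt_def]) h)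
        (lt_asymm hlt)
  · rintro ⟨hm, hs⟩
    refine ⟨hm, ?_⟩
    have hadj : ∀ (a : ℕ) (ha : a + 1 < t),
        g ⟨a, Nat.lt_of_succ_lt ha⟩ = g ⟨a + 1, ha⟩ →
          σ ⟨a, Nat.lt_of_succ_lt ha⟩ < σ ⟨a + 1, ha⟩ := by
      intro a ha heq
      have hne : σ ⟨a, Nat.lt_of_succ_lt ha⟩ ≠ σ ⟨a + 1, ha⟩ :=
        fun hc => absurd (σ.injective hc) (by simp [Fin.ext_iff])
      rcases lt_or_gt_of_ne hne with h | h
      · exact h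
      · exact absurd heq (ne_of_lt (hs a ha h))
    have key : ∀ (k a b : ℕ) (hb : b < t) (hab : a + k + 1 = b),
        g ⟨a, by omega⟩ = g ⟨b, hb⟩ → σ ⟨a, by omega⟩ < σ ⟨b, hb⟩ := by
      intro k
      induction k with
      | zero =>
        intro a b hb hab heq
        have e : (⟨a + 1, by omega⟩ : Fin t) = ⟨b, hb⟩ := Fin.ext (by simp; omega)
        rw [← e] at heq ⊢
        exact hadj a (by omega) heq
      | succ k ih =>
        intro a b hb hab heq
        have e : (⟨a + k + 1 + 1, by omega⟩ : Fin t) = ⟨b, hb⟩ := Fin.ext (by simp; omega)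
        rw [← e] at heq ⊢
        have h1 : g ⟨a, by omega⟩ ≤ g ⟨a + 1, by omega⟩ := hm (by simp [Fin.le_def])
        have h2 : g ⟨a + 1, by omega⟩ ≤ g ⟨a + k + 1 + 1, by omega⟩ :=
          hm (by simp [Fin.le_def]; omega)
        have eq1 : g ⟨a, by omega⟩ = g ⟨a + 1, by omega⟩ :=
          le_antisymm h1 (le_trans h2 (le_of_eq heq.symm))
        have eq2 : g ⟨a + 1, by omega⟩ = g ⟨a + k + 1 + 1, by omega⟩ :=
          eq1.symm.trans heq
        exact lt_trans (hadj a (by omega) eq1)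
          (ih (a + 1) (a + k + 1 + 1) (by omega) (by omega) eq2)
    intro i j hij heq
    have hij' : (i : ℕ) < (j : ℕ) := hij
    have h1 : g ⟨(i : ℕ), i.2⟩ = g ⟨(j : ℕ), j.2⟩ := heq
    exact key ((j : ℕ) - (i : ℕ) - 1) (i : ℕ) (j : ℕ) j.2 (by omega) h1

lemma sigma_subtype_ext {t m : ℕ} {σ1 σ2 : Equiv.Perm (Fin t)}
    {g1 : {g : Fin t → Fin m // Mcond t σ1 g}} {g2 : {g : Fin t → Fin m // Mcond t σ2 g}}
    (h : σ1 = σ2) (h2 : g1.1 = g2.1) :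
    (⟨σ1, g1⟩ : Σ σ : Equiv.Perm (Fin t), {g : Fin t → Fin m // Mcond t σ g}) = ⟨σ2, g2⟩ := by
  subst h
  exact congrArg _ (Subtype.ext h2)

/-- Classification of functions by their sorting permutation. -/
def bigEquiv (t m : ℕ) :
    (Fin t → Fin m) ≃ (Σ σ : Equiv.Perm (Fin t), {g : Fin t → Fin m // Mcond t σ g}) where
  toFun f := ⟨Tuple.sort f, ⟨f ∘ Tuple.sort f, by
    have h := (Tuple.eq_sort_iff (f := f) (σ := Tuple.sort f)).1 rfl
    exact ⟨h.1, fun i j hij heq => h.2 i j hij heq⟩⟩⟩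
  invFun p := p.2.1 ∘ ⇑(p.1)⁻¹
  left_inv f := by
    funext x
    simp
  right_inv p := by
    obtain ⟨σ, g, hg⟩ := p
    have hc : (g ∘ ⇑σ⁻¹) ∘ ⇑σ = g := by funext x; simp
    have h1 : Tuple.sort (g ∘ ⇑σ⁻¹) = σ := by
      symm
      rw [Tuple.eq_sort_iff]
      constructor
      · show Monotone ((g ∘ ⇑σ⁻¹) ∘ ⇑σ)
        rw [hc]; exact hg.1
      · intro i j hij heq
        have heq' : g i = g j := by simpa using heq
        exact hg.2 i j hij heq'
    apply sigma_subtype_ext h1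
    show (g ∘ ⇑σ⁻¹) ∘ ⇑(Tuple.sort (g ∘ ⇑σ⁻¹)) = g
    rw [h1, hc]

lemma worpitzky (t m : ℕ) :
    m ^ t = ∑ σ : Equiv.Perm (Fin t), (m + (t - 1 - descentCount t σ)).choose t := by
  classical
  have h1 : m ^ t = Fintype.card (Fin t → Fin m) := by simp
  rw [h1, Fintype.card_congr (bigEquiv t m), Fintype.card_sigma]
  refine Finset.sum_congr rfl fun σ _ => ?_
  rw [descentCount_eq, ← card_Qcond t σ m, ← Nat.card_eq_fintype_card]
  exact Nat.card_congr (Equiv.subtypeEquivRight fun g => Mcond_iff_Qcond t σ g)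


lemma descent_add_one_le (t : ℕ) (σ : Equiv.Perm (Fin t)) (ht : 1 ≤ t) :
    descentCount t σ + 1 ≤ t := by
  rw [descentCount_eq]
  rcases dcnt_le t σ t with h | h
  · exact h
  · omega

open PowerSeries in
lemma keyPS (t : ℕ) (ht : 1 ≤ t) :
    (PowerSeries.mk fun m => ((m : ℚ)) ^ t) * (1 - PowerSeries.X) ^ (t + 1)
      = ∑ σ : Equiv.Perm (Fin t), (PowerSeries.X : PowerSeries ℚ) ^ (descentCount t σ + 1) := by
  classical
  have hu : (invOneSubPow ℚ (t + 1)).val = mk fun n => ((t + n).choose t : ℚ) :=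
    invOneSubPow_val_succ_eq_mk_add_choose ℚ t
  have hS1 : (mk fun m => ((m : ℚ)) ^ t)
      = (∑ σ : Equiv.Perm (Fin t), (X : ℚ⟦X⟧) ^ (descentCount t σ + 1))
        * (invOneSubPow ℚ (t + 1)).val := by
    ext n
    rw [coeff_mk, Finset.sum_mul, map_sum]
    have hterm : ∀ σ : Equiv.Perm (Fin t),
        (coeff n) ((X : ℚ⟦X⟧) ^ (descentCount t σ + 1) * (invOneSubPow ℚ (t + 1)).val)
          = ((n + (t - 1 - descentCount t σ)).choose t : ℚ) := by
      intro σ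
      have hd := descent_add_one_le t σ ht
      rw [hu, PowerSeries.coeff_X_pow_mul', coeff_mk]
      split_ifs with h
      · congr 2
        omega
      · symm
        norm_cast
        exact Nat.choose_eq_zero_of_lt (by omega)
    rw [Finset.sum_congr rfl fun σ _ => hterm σ,
      show ((n : ℚ)) ^ t = ((n ^ t : ℕ) : ℚ) from by push_cast; ring, worpitzky t n]
    push_cast
    rfl
  rw [hS1, mul_assoc]
  have hinv : (invOneSubPow ℚ (t + 1)).val * (1 - X) ^ (t + 1) = 1 := by
    have h2 : ((invOneSubPow ℚ (t + 1)) : ℚ⟦X⟧ˣ).inv = (1 - X) ^ (t + 1) := rfl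
    rw [← h2]
    exact (invOneSubPow ℚ (t + 1)).val_inv
  rw [hinv, mul_one]

open PowerSeries in
lemma sum_X_pow_eq (t : ℕ) (ht : 1 ≤ t) :
    ∑ σ : Equiv.Perm (Fin t), (PowerSeries.X : PowerSeries ℚ) ^ (descentCount t σ + 1)
      = (eulerianPoly t : PowerSeries ℚ) := by
  classical
  ext n
  rw [map_sum]
  simp_rw [coeff_X_pow]
  rw [Finset.sum_boole, Polynomial.coeff_coe, eulerianPoly, Polynomial.finset_sum_coeff]
  simp_rw [Polynomial.coeff_C_mul, Polynomial.coeff_X_pow, mul_ite, mul_one, mul_zero]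
  rw [Finset.sum_ite_eq]
  split_ifs with h
  · have he : eulerian t n = (Finset.univ.filter
        fun σ : Equiv.Perm (Fin t) => descentCount t σ = n - 1).card := by
      rw [eulerian, Nat.card_eq_fintype_card, Fintype.card_subtype]
    rw [he]
    norm_cast
    congr 1
    ext σ
    simp only [Finset.mem_filter, Finset.mem_univ, true_and]
    rw [Finset.mem_Icc] at h
    omega
  · norm_cast
    rw [Finset.card_eq_zero, Finset.filter_eq_empty_iff]
    intro σ _
    have hd := descent_add_one_le t σ ht
    rw [Finset.mem_Icc] at h
    omega

open PowerSeries in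
lemma E1 (t : ℕ) (ht : 1 ≤ t) :
    (X : ℚ⟦X⟧) * PowerSeries.mk (fun n => (WG (starGraph t) n : ℚ))
      = (PowerSeries.mk fun m => ((m : ℚ)) ^ t) * PowerSeries.mk 1 := by
  ext n
  cases n with
  | zero =>
    rw [coeff_zero_X_mul, coeff_zero_eq_constantCoeff, map_mul]
    simp [zero_pow (by omega : t ≠ 0)]
  | succ n =>
    rw [coeff_succ_X_mul, coeff_mk, coeff_mul,
      Finset.Nat.sum_antidiagonal_eq_sum_range_succ_mk]
    simp_rw [coeff_mk]
    have h1 : ∀ k, ((1 : ℕ → ℚ) (n + 1 - k)) = 1 := fun k => rfl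
    simp_rw [h1, mul_one]
    rw [WG_star]
    rw [Finset.sum_range_succ']
    rw [show ((0 : ℕ) : ℚ) ^ t = 0 from by simp [zero_pow (by omega : t ≠ 0)]]
    rw [add_zero]
    push_cast
    rw [← Finset.Ico_add_one_right_eq_Icc, Finset.sum_Ico_eq_sum_range]
    simp [add_comm]

end StarAux

theorem star_weightings (t : ℕ) (ht : 1 ≤ t) :
    (∀ n : ℕ, WG (starGraph t) n = ∑ k ∈ Finset.Icc 1 (n + 1), k ^ t) ∧
    (PowerSeries.X * PowerSeries.mk fun n => (WG (starGraph t) n : ℚ))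
        * (1 - PowerSeries.X) ^ (t + 2)
      = (eulerianPoly t : PowerSeries ℚ) := by
  constructor
  · exact fun n => StarAux.WG_star t n
  · rw [StarAux.E1 t ht, ← StarAux.sum_X_pow_eq t ht, ← StarAux.keyPS t ht]
    have h1 := PowerSeries.mk_one_mul_one_sub_eq_one ℚ
    calc (PowerSeries.mk fun m => ((m : ℚ)) ^ t) * PowerSeries.mk 1
          * (1 - PowerSeries.X) ^ (t + 2)
        = (PowerSeries.mk fun m => ((m : ℚ)) ^ t) * (1 - PowerSeries.X) ^ (t + 1)
          * (PowerSeries.mk 1 * (1 - PowerSeries.X)) := by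
          rw [show t + 2 = (t + 1) + 1 from rfl, pow_succ]; ring
      _ = (PowerSeries.mk fun m => ((m : ℚ)) ^ t) * (1 - PowerSeries.X) ^ (t + 1) := by
          rw [h1, mul_one]
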